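/- Let k be a field and let u ∈ k((t)) be a nonzero Laurent series, written u = t^m · v with m ∈ ℤ and v a unit of the power series ring k[[t]] (i.e., v has nonzero constant term). Then the residue (coefficient of t^{-1}) of the logarithmic derivative u'/u equals m·1_k. -/

import Mathlib

/-- Formal derivative of a Laurent series: `(lderiv f).coeff n = (n+1) • f.coeff (n+1)`. -/
noncomputable def LaurentSeries.lderiv {K : Type*} [Field K] (f : LaurentSeries K) :
    LaurentSeries K where
  coeff n := (n + 1 : ℤ) • f.coeff (n + 1)
  isPWO_support' := by
    have h : (Function.support fun n : ℤ => (n + 1 : ℤ) • f.coeff (n + 1)) ⊆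
        (fun n : ℤ => n - 1) '' f.support := by
      intro n hn
      refine ⟨n + 1, ?_, by ring⟩
      intro h0
      simp [h0] at hn
    exact (f.isPWO_support.image_of_monotone (fun a b hab => by omega)).mono h

theorem ofPowerSeries_coeff_neg {K : Type*} [Field K] (x : PowerSeries K) (n : ℤ) (hn : n < 0) :
    (HahnSeries.ofPowerSeries ℤ K x).coeff n = 0 := by
  rw [HahnSeries.ofPowerSeries_apply]
  apply HahnSeries.embDomain_notin_range
  rintro ⟨a, ha⟩
  have ha' : (a : ℤ) = n := ha
  omega

/-- if `u = t^m · v` is a nonzero Laurent series with `v` a unit power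
series, then the residue of the logarithmic derivative `u'/u` is `m · 1_k`. -/
theorem residue_logDeriv_eq_order
    {K : Type*} [Field K] (u : LaurentSeries K) (hu0 : u ≠ 0)
    (m : ℤ) (v : PowerSeries K) (hv : PowerSeries.constantCoeff v ≠ 0)
    (hu : u = HahnSeries.single m 1 * (HahnSeries.ofPowerSeries ℤ K v)) :
    (u.lderiv / u).coeff (-1) = (m : K) := by
  set w := v⁻¹ with hwdef
  have hvw : v * w = 1 := PowerSeries.mul_inv_cancel v hv
  set V := HahnSeries.ofPowerSeries ℤ K v with hVdef
  set W := HahnSeries.ofPowerSeries ℤ K w with hWdef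
  -- the inverse of u
  have huinv : u⁻¹ = HahnSeries.single (-m) 1 * W := by
    apply inv_eq_of_mul_eq_one_right
    rw [hu, mul_mul_mul_comm, HahnSeries.single_mul_single, add_neg_cancel,
      hVdef, hWdef, ← map_mul, hvw]
    simp [HahnSeries.single_zero_one]
  -- coefficients of u
  have hucoeff : ∀ n : ℤ, u.coeff n = V.coeff (n - m) := by
    intro n
    have := HahnSeries.coeff_single_mul_add (r := (1 : K)) (x := V) (a := n - m) (b := m)
    rw [sub_add_cancel] at this
    rw [hu, this, one_mul]
  set B := u.lderiv * HahnSeries.single (-m) (1 : K) with hBdef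
  have hBcoeff : ∀ n : ℤ, B.coeff n = (n + m + 1 : ℤ) • V.coeff (n + 1) := by
    intro n
    have := HahnSeries.coeff_mul_single_add (r := (1 : K)) (x := u.lderiv)
      (a := n + m) (b := -m)
    rw [show n + m + -m = n by ring] at this
    rw [hBdef, this, mul_one]
    show (n + m + 1 : ℤ) • u.coeff (n + m + 1) = _
    rw [hucoeff, show n + m + 1 - m = n + 1 by ring]
  have hBsupp : ∀ i : ℤ, B.coeff i ≠ 0 → -1 ≤ i := by
    intro i hi
    by_contra h
    push_neg at h
    rw [hBcoeff, hVdef, ofPowerSeries_coeff_neg v (i + 1) (by omega), smul_zero] at hi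
    exact hi rfl
  have hWsupp : ∀ j : ℤ, W.coeff j ≠ 0 → 0 ≤ j := by
    intro j hj
    by_contra h
    push_neg at h
    exact hj (ofPowerSeries_coeff_neg w j h)
  have key : (B * W).coeff (-1) = B.coeff (-1) * W.coeff 0 := by
    rw [HahnSeries.coeff_mul]
    apply Finset.sum_eq_single ((-1 : ℤ), (0 : ℤ))
    · rintro ⟨i, j⟩ hij hne
      rw [Finset.mem_addAntidiagonal] at hij
      obtain ⟨h1, h2, h3⟩ := hij
      have hi := hBsupp i h1
      have hj := hWsupp j h2
      exfalso
      apply hne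
      have : i = -1 ∧ j = 0 := by omega
      simp [this.1, this.2]
    · intro habs
      by_contra h
      apply habs
      rw [Finset.mem_addAntidiagonal]
      refine ⟨?_, ?_, by ring⟩
      · intro h0; apply h; rw [h0, zero_mul]
      · intro h0; apply h; rw [h0, mul_zero]
  have hdiv : u.lderiv / u = B * W := by
    rw [div_eq_mul_inv, huinv, hBdef, mul_assoc]
  have hV0 : V.coeff 0 = PowerSeries.constantCoeff v := by
    have := HahnSeries.ofPowerSeries_apply_coeff (Γ := ℤ) v 0
    simpa [PowerSeries.coeff_zero_eq_constantCoeff] using this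
  have hW0 : W.coeff 0 = PowerSeries.constantCoeff w := by
    have := HahnSeries.ofPowerSeries_apply_coeff (Γ := ℤ) w 0
    simpa [PowerSeries.coeff_zero_eq_constantCoeff] using this
  have hone : PowerSeries.constantCoeff v * PowerSeries.constantCoeff w = 1 := by
    rw [← map_mul, hvw, map_one]
  rw [hdiv, key, hBcoeff]
  norm_num
  rw [hV0, hW0, mul_assoc, hone, mul_one]
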